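/- Let ρ be a density matrix, Π a projection, ρ^Π = ΠρΠ, ρ^{Π̄} = (I−Π)ρ(I−Π), W = Tr[ρ^{Π̄}], H the block off-diagonal part of ρ with ‖H‖₁ ≤ 2ε, and Γ an operator with 0 ≤ Γ ≤ I. Then Tr[ρ^Π Γ] ≤ Tr[ρΓ] + ε and Tr[ρ^Π Γ] ≥ Tr[ρΓ] − W − ε. -/

import Mathlib

open Matrix ComplexOrder

/-- The trace norm `‖A‖₁ = Tr √(AᴴA)` of a complex matrix. -/
noncomputable def traceNorm {d : ℕ} (A : Matrix (Fin d) (Fin d) ℂ) : ℝ :=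
  ((Matrix.posSemidef_conjTranspose_mul_self A).1.eigenvectorUnitary.1 *
    diagonal (((↑) : ℝ → ℂ) ∘ (Real.sqrt ·) ∘ (Matrix.posSemidef_conjTranspose_mul_self A).1.eigenvalues) *
    (star (Matrix.posSemidef_conjTranspose_mul_self A).1.eigenvectorUnitary :
      Matrix (Fin d) (Fin d) ℂ)).trace.re

lemma real_key {n : ℕ} (a c : Fin n → ℝ) (ε : ℝ) (h0 : ∀ i, 0 ≤ c i) (h1 : ∀ i, c i ≤ 1)
    (hs : ∑ i, a i = 0) (habs : ∑ i, |a i| ≤ 2 * ε) : |∑ i, a i * c i| ≤ ε := by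
  have hmax : ∑ i, max (a i) 0 ≤ ε := by
    have : (2:ℝ) * ∑ i, max (a i) 0 = ∑ i, a i + ∑ i, |a i| := by
      rw [Finset.mul_sum, ← Finset.sum_add_distrib]
      refine Finset.sum_congr rfl fun i _ => ?_
      rcases le_total 0 (a i) with h | h
      · rw [max_eq_left h, abs_of_nonneg h]; ring
      · rw [max_eq_right h, abs_of_nonpos h]; ring
    linarith
  have hmin : -ε ≤ ∑ i, min (a i) 0 := by
    have : (2:ℝ) * ∑ i, min (a i) 0 = ∑ i, a i - ∑ i, |a i| := by
      rw [Finset.mul_sum, ← Finset.sum_sub_distrib]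
      refine Finset.sum_congr rfl fun i _ => ?_
      rcases le_total 0 (a i) with h | h
      · rw [min_eq_right h, abs_of_nonneg h]; ring
      · rw [min_eq_left h, abs_of_nonpos h]; ring
    linarith
  rw [abs_le]
  constructor
  · calc -ε ≤ ∑ i, min (a i) 0 := hmin
      _ ≤ ∑ i, a i * c i := by
        refine Finset.sum_le_sum fun i _ => ?_
        rcases le_total 0 (a i) with h | h
        · rw [min_eq_right h]; exact mul_nonneg h (h0 i)
        · rw [min_eq_left h]
          nlinarith [h0 i, h1 i]
  · refine le_trans ?_ hmax
    refine Finset.sum_le_sum fun i _ => ?_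
    rcases le_total 0 (a i) with h | h
    · rw [max_eq_left h]; nlinarith [h0 i, h1 i]
    · rw [max_eq_right h]; exact mul_nonpos_of_nonpos_of_nonneg h (h0 i)

lemma psd_diag_re_nonneg {d : ℕ} {A : Matrix (Fin d) (Fin d) ℂ} (hA : A.PosSemidef)
    (i : Fin d) : 0 ≤ (A i i).re := by
  have h := hA.diag_nonneg (i := i)
  rw [Complex.le_def] at h
  simpa using h.1

open scoped MatrixOrder

lemma herm_trace_mul_bound {d : ℕ} {H Γ : Matrix (Fin d) (Fin d) ℂ} {ε : ℝ}
    (hH : H.IsHermitian) (htr : H.trace = 0) (hΓ : Γ.PosSemidef)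
    (hΓle : (1 - Γ).PosSemidef) (hnorm : traceNorm H ≤ 2 * ε) :
    |(H * Γ).trace.re| ≤ ε := by
  set U : Matrix (Fin d) (Fin d) ℂ := (hH.eigenvectorUnitary : Matrix (Fin d) (Fin d) ℂ) with hU
  set ev : Fin d → ℝ := hH.eigenvalues with hev
  have hUU : star U * U = 1 := Matrix.mem_unitaryGroup_iff'.mp hH.eigenvectorUnitary.2
  have hUU' : U * star U = 1 := Matrix.mem_unitaryGroup_iff.mp hH.eigenvectorUnitary.2
  have hspec : H = U * diagonal (RCLike.ofReal ∘ ev) * star U := hH.spectral_theorem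
  set M : Matrix (Fin d) (Fin d) ℂ := star U * Γ * U with hM
  have hMpsd : M.PosSemidef := by
    have := hΓ.conjTranspose_mul_mul_same U
    rwa [← Matrix.star_eq_conjTranspose] at this
  set c : Fin d → ℝ := fun i => (M i i).re with hc
  have hc0 : ∀ i, 0 ≤ c i := fun i => psd_diag_re_nonneg hMpsd i
  have hc1 : ∀ i, c i ≤ 1 := by
    intro i
    have hN : (star U * (1 - Γ) * U).PosSemidef := by
      have := hΓle.conjTranspose_mul_mul_same U
      rwa [← Matrix.star_eq_conjTranspose] at this
    have hNe : star U * (1 - Γ) * U = 1 - M := by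
      rw [Matrix.mul_sub, Matrix.mul_one, Matrix.sub_mul, hUU, hM]
    have := psd_diag_re_nonneg (hNe ▸ hN) i
    have h1 : ((1 : Matrix (Fin d) (Fin d) ℂ) i i).re = 1 := by simp [Matrix.one_apply]
    rw [Matrix.sub_apply, Complex.sub_re, h1] at this
    linarith
  -- trace of H * Γ
  have htrHΓ : (H * Γ).trace = ∑ i, (ev i : ℂ) * M i i := by
    calc (H * Γ).trace = (U * diagonal (RCLike.ofReal ∘ ev) * (star U * Γ)).trace := by
          rw [hspec, Matrix.mul_assoc (U * diagonal (RCLike.ofReal ∘ ev)) (star U) Γ]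
      _ = (diagonal (RCLike.ofReal ∘ ev) * M).trace := by
          rw [Matrix.trace_mul_comm (U * diagonal (RCLike.ofReal ∘ ev)) (star U * Γ),
            ← Matrix.mul_assoc (star U * Γ) U (diagonal (RCLike.ofReal ∘ ev)),
            Matrix.trace_mul_comm (star U * Γ * U) (diagonal (RCLike.ofReal ∘ ev)), hM]
      _ = ∑ i, (ev i : ℂ) * M i i := by
          rw [Matrix.trace]
          refine Finset.sum_congr rfl fun i _ => ?_
          simp [Matrix.diagonal_mul, Matrix.diag]
  have hmul : ∀ v w : Fin d → ℂ,
      (U * diagonal v * star U) * (U * diagonal w * star U) = U * diagonal (fun i => v i * w i) * star U := by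
    intro v w
    rw [← Matrix.diagonal_mul_diagonal]
    simp only [Matrix.mul_assoc]
    rw [← Matrix.mul_assoc (star U) U (diagonal w * star U), hUU, Matrix.one_mul]
  have htrU : ∀ v : Fin d → ℂ, (U * diagonal v * star U).trace = ∑ i, v i := by
    intro v
    rw [Matrix.trace_mul_cycle U (diagonal v) (star U), hUU, Matrix.one_mul,
      Matrix.trace_diagonal]
  have hsum0 : ∑ i, ev i = 0 := by
    have h := htrU (RCLike.ofReal ∘ ev)
    rw [← hspec, htr] at h
    simp only [Function.comp_apply] at h
    have h2 : ((∑ i, ev i : ℝ) : ℂ) = ((0 : ℝ) : ℂ) := by push_cast; simpa using h.symm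
    exact Complex.ofReal_injective h2
  have habs : ∑ i, |ev i| ≤ 2 * ε := by
    set B : Matrix (Fin d) (Fin d) ℂ :=
      U * diagonal (fun i => ((|ev i| : ℝ) : ℂ)) * star U with hB
    have hBpsd : B.PosSemidef := by
      have hd : Matrix.PosSemidef (diagonal (fun i => ((|ev i| : ℝ) : ℂ))) :=
        Matrix.PosSemidef.diagonal fun i => by
          simp only [Pi.zero_apply]
          exact_mod_cast abs_nonneg (ev i)
      have := hd.mul_mul_conjTranspose_same U
      rwa [← Matrix.star_eq_conjTranspose] at this
    have hBsq : B ^ 2 = Hᴴ * H := by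
      rw [hH.eq, pow_two, hB, hmul, hspec, hmul]
      congr 1
      congr 1
      apply congrArg diagonal
      funext i
      simp only [Function.comp_apply]
      rw [← Complex.ofReal_mul, abs_mul_abs_self]; exact (RCLike.ofReal_mul (K := ℂ) (ev i) (ev i))
    have hBe : B = ((Matrix.posSemidef_conjTranspose_mul_self H).1.eigenvectorUnitary.1 *
    diagonal (((↑) : ℝ → ℂ) ∘ (Real.sqrt ·) ∘ (Matrix.posSemidef_conjTranspose_mul_self H).1.eigenvalues) *
    (star (Matrix.posSemidef_conjTranspose_mul_self H).1.eigenvectorUnitary :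
      Matrix (Fin d) (Fin d) ℂ)) := by
      rw [eq_comm]
      have e1 : ((Matrix.posSemidef_conjTranspose_mul_self H).1.eigenvectorUnitary.1 *
    diagonal (((↑) : ℝ → ℂ) ∘ (Real.sqrt ·) ∘ (Matrix.posSemidef_conjTranspose_mul_self H).1.eigenvalues) *
    (star (Matrix.posSemidef_conjTranspose_mul_self H).1.eigenvectorUnitary :
      Matrix (Fin d) (Fin d) ℂ)) = cfc Real.sqrt (Hᴴ * H) := by
        rw [(posSemidef_conjTranspose_mul_self H).1.cfc_eq]; rfl
      rw [e1, ← cfcₙ_eq_cfc (hf0 := Real.sqrt_zero), ← CFC.sqrt_eq_real_sqrt _ (posSemidef_conjTranspose_mul_self H).nonneg,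
        CFC.sqrt_eq_iff _ _ (posSemidef_conjTranspose_mul_self H).nonneg hBpsd.nonneg, ← pow_two, hBsq]
    have : traceNorm H = ∑ i, |ev i| := by
      rw [traceNorm, ← hBe, hB, htrU, Complex.re_sum]
      exact Finset.sum_congr rfl fun i _ => Complex.ofReal_re _
    linarith [this ▸ hnorm]
  have hre : (H * Γ).trace.re = ∑ i, ev i * c i := by
    rw [htrHΓ, Complex.re_sum]
    exact Finset.sum_congr rfl fun i _ => by
      rw [Complex.mul_re, Complex.ofReal_re, Complex.ofReal_im, zero_mul, sub_zero]
  rw [hre]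
  exact real_key ev c ε hc0 hc1 hsum0 habs

lemma psd_trace_re_nonneg {d : ℕ} {A : Matrix (Fin d) (Fin d) ℂ} (hA : A.PosSemidef) :
    0 ≤ A.trace.re := by
  rw [Matrix.trace, Complex.re_sum]
  exact Finset.sum_nonneg fun i _ => psd_diag_re_nonneg hA i

lemma trace_mul_psd_nonneg {d : ℕ} {A B : Matrix (Fin d) (Fin d) ℂ}
    (hA : A.PosSemidef) (hB : B.PosSemidef) : 0 ≤ (A * B).trace.re := by
  have h1 : A * B = A * ((CFC.sqrt B) * (CFC.sqrt B)) := by rw [CFC.sqrt_mul_sqrt_self B hB.nonneg]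
  have h2 : (A * ((CFC.sqrt B) * (CFC.sqrt B))).trace = ((CFC.sqrt B) * A * (CFC.sqrt B)).trace := by
    rw [← Matrix.mul_assoc, Matrix.trace_mul_cycle]
  have h3 : ((CFC.sqrt B) * A * (CFC.sqrt B)).PosSemidef := by
    have := hA.mul_mul_conjTranspose_same (CFC.sqrt B)
    rwa [(CFC.sqrt_nonneg B).posSemidef.1.eq] at this
  rw [h1, h2]
  exact psd_trace_re_nonneg h3

/-- Let `ρ` be a density matrix, `P` a projection, `ρ^Π = PρP`,
`ρ^Π̄ = (1−P)ρ(1−P)`, `W = Tr[ρ^Π̄]`, `H = ρ − ρ^Π − ρ^Π̄` with `‖H‖₁ ≤ 2ε`, and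
`0 ≤ Γ ≤ I`.  Then `Tr[ρ^Π Γ] ≤ Tr[ρΓ] + ε` and `Tr[ρ^Π Γ] ≥ Tr[ρΓ] − W − ε`. -/
theorem trace_proj_block_bounds {d : ℕ}
    (ρ P Γ : Matrix (Fin d) (Fin d) ℂ) (ε : ℝ)
    (hρ : ρ.PosSemidef) (hρtr : ρ.trace = 1)
    (hP1 : Pᴴ = P) (hP2 : P * P = P)
    (hΓ : Γ.PosSemidef) (hΓle : (1 - Γ).PosSemidef)
    (hH : traceNorm (ρ - P * ρ * P - (1 - P) * ρ * (1 - P)) ≤ 2 * ε) :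
    ((P * ρ * P) * Γ).trace.re ≤ (ρ * Γ).trace.re + ε ∧
    (ρ * Γ).trace.re - ((1 - P) * ρ * (1 - P)).trace.re - ε ≤
      ((P * ρ * P) * Γ).trace.re := by
  set Q : Matrix (Fin d) (Fin d) ℂ := 1 - P with hQ
  have hQ1 : Qᴴ = Q := by rw [hQ, Matrix.conjTranspose_sub, Matrix.conjTranspose_one, hP1]
  have hQ2 : Q * Q = Q := by
    rw [hQ, Matrix.sub_mul, Matrix.one_mul, Matrix.mul_sub, Matrix.mul_one, hP2]
    abel
  have hPρP : (P * ρ * P).PosSemidef := by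
    have := hρ.mul_mul_conjTranspose_same P
    rwa [hP1] at this
  have hQρQ : (Q * ρ * Q).PosSemidef := by
    have := hρ.mul_mul_conjTranspose_same Q
    rwa [hQ1] at this
  set H : Matrix (Fin d) (Fin d) ℂ := ρ - P * ρ * P - Q * ρ * Q with hHdef
  have hHherm : H.IsHermitian := (hρ.1.sub hPρP.1).sub hQρQ.1
  have hHtr : H.trace = 0 := by
    have h1 : (P * ρ * P).trace = (P * ρ).trace := by
      rw [Matrix.trace_mul_cycle P ρ P, hP2]
    have h2 : (Q * ρ * Q).trace = (Q * ρ).trace := by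
      rw [Matrix.trace_mul_cycle Q ρ Q, hQ2]
    have h3 : (Q * ρ).trace = ρ.trace - (P * ρ).trace := by
      rw [hQ, Matrix.sub_mul, Matrix.one_mul, Matrix.trace_sub]
    rw [hHdef, Matrix.trace_sub, Matrix.trace_sub, h1, h2, h3]
    ring
  have hbound : |(H * Γ).trace.re| ≤ ε :=
    herm_trace_mul_bound hHherm hHtr hΓ hΓle hH
  have hsplit : (H * Γ).trace.re =
      (ρ * Γ).trace.re - ((P * ρ * P) * Γ).trace.re - ((Q * ρ * Q) * Γ).trace.re := by
    rw [hHdef, Matrix.sub_mul, Matrix.sub_mul, Matrix.trace_sub, Matrix.trace_sub,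
      Complex.sub_re, Complex.sub_re]
  have h2 : 0 ≤ ((Q * ρ * Q) * Γ).trace.re := trace_mul_psd_nonneg hQρQ hΓ
  have h3 : ((Q * ρ * Q) * Γ).trace.re ≤ (Q * ρ * Q).trace.re := by
    have h4 : 0 ≤ ((Q * ρ * Q) * (1 - Γ)).trace.re := trace_mul_psd_nonneg hQρQ hΓle
    have h5 : (Q * ρ * Q) * (1 - Γ) = Q * ρ * Q - (Q * ρ * Q) * Γ := by
      rw [Matrix.mul_sub, Matrix.mul_one]
    rw [h5, Matrix.trace_sub, Complex.sub_re] at h4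
    linarith
  rw [abs_le] at hbound
  exact ⟨by linarith [hbound.1], by linarith [hbound.2]⟩
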